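/- Suppose each objective f_i is M_i-relatively Lipschitz continuous and μ_t-relatively strongly convex w.r.t. h at the productive step t where it is used, the constraint g is M_g-relatively Lipschitz continuous and μ_g-relatively strongly convex w.r.t. h (with μ_t = μ_g at non-productive steps), and d : E → ℝ is M_d-relatively Lipschitz continuous and 1-relatively strongly convex w.r.t. h with d ≥ 0 on Q and A² = sup_{x ∈ Q} d(x) < ∞. Set M = max of all M_i and M_g. Run the regularized switching algorithm with λ_t = ½·(√((μ_{1:t} + λ_{1:t−1})² + 8·M²/(A² + 2·M_d²)) − (μ_{1:t} + λ_{1:t−1})) and η_t = 1/(μ_{1:t} + λ_{1:t}), where μ_{1:t} + λ_{1:t} > 0. If exactly T productive steps and T_J non-productive steps are made and Regret_T ≥ 0, then Regret_T ≤ λ_{1:T+T_J}·A² + Σ_{t=1}^{T+T_J} (M + λ_t·M_d)²/(μ_{1:t} + λ_{1:t}) − ε·T_J, and g(x_t) ≤ ε at every productive step t. -/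

import Mathlib

open scoped RealInnerProductSpace
open Finset

/-- The Bregman divergence `V(y,x) = h(y) − h(x) − ⟨∇h(x), y − x⟩`. -/
noncomputable def breg {E : Type*} [NormedAddCommGroup E] [InnerProductSpace ℝ E]
    [CompleteSpace E] (h : E → ℝ) (y x : E) : ℝ :=
  h y - h x - ⟪gradient h x, y - x⟫

/-- `f` is `M`-relatively Lipschitz continuous w.r.t. the prox-function `h` on `Q`. -/
noncomputable def RelLipschitz {E : Type*} [NormedAddCommGroup E] [InnerProductSpace ℝ E]
    [CompleteSpace E] (h : E → ℝ) (Q : Set E) (M : ℝ) (f : E → ℝ) : Prop :=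
  ∀ x ∈ Q, ∀ y ∈ Q, 0 ≤ ⟪gradient f x, y - x⟫ + M * Real.sqrt (2 * breg h y x)

/-- `f` is `μ`-relatively strongly convex w.r.t. the prox-function `h` on `Q`. -/
noncomputable def RelStrongConvex {E : Type*} [NormedAddCommGroup E] [InnerProductSpace ℝ E]
    [CompleteSpace E] (h : E → ℝ) (Q : Set E) (μ : ℝ) (f : E → ℝ) : Prop :=
  ∀ x ∈ Q, ∀ y ∈ Q, f y + ⟪gradient f y, x - y⟫ + μ * breg h x y ≤ f x

/-- One mirror-descent step from `x` with step size `η` in the direction `v`: there is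
`y` with `∇h(y) = ∇h(x) − η·v`, and the next iterate `x'` is the Bregman projection of
`y` onto `Q`. -/
noncomputable def MDStepV {E : Type*} [NormedAddCommGroup E] [InnerProductSpace ℝ E]
    [CompleteSpace E] (h : E → ℝ) (Q : Set E) (η : ℝ) (v : E) (x x' : E) : Prop :=
  ∃ y : E, gradient h y = gradient h x - η • v ∧ x' ∈ Q ∧
    IsMinOn (fun z => breg h z y) Q x'

section Aux
variable {E : Type*} [NormedAddCommGroup E] [InnerProductSpace ℝ E] [CompleteSpace E]

lemma hasDerivAt_comp_line (h : E → ℝ) (hd : Differentiable ℝ h) (x v : E) (t : ℝ) :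
    HasDerivAt (fun s : ℝ => h (x + s • v)) ⟪gradient h (x + t • v), v⟫ t := by
  have hc : HasDerivAt (fun s : ℝ => x + s • v) v t := by
    simpa using ((hasDerivAt_id t).smul_const v).const_add x
  have hf : HasFDerivAt h (InnerProductSpace.toDual ℝ E (gradient h (x + t • v)))
      (x + t • v) := (hd (x + t • v)).hasGradientAt.hasFDerivAt
  simpa [Function.comp_def, InnerProductSpace.toDual_apply_apply] using hf.comp_hasDerivAt t hc

lemma grad_fo (h : E → ℝ) (hd : Differentiable ℝ h) (hc : ConvexOn ℝ Set.univ h)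
    (x y : E) : h x + ⟪gradient h x, y - x⟫ ≤ h y := by
  have hGr : HasDerivAt (fun s : ℝ => h (x + s • (y - x))) ⟪gradient h x, y - x⟫ 0 := by
    simpa using hasDerivAt_comp_line h hd x (y - x) 0
  have hφc : ConvexOn ℝ Set.univ (fun s : ℝ => h (x + s • (y - x))) := by
    have := hc.comp_affineMap (AffineMap.lineMap x y : ℝ →ᵃ[ℝ] E)
    simpa [Function.comp_def, AffineMap.lineMap_apply, add_comm] using this
  have := hφc.le_slope_of_hasDerivAt (Set.mem_univ (0:ℝ)) (Set.mem_univ 1) one_pos hGr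
  simp [slope_def_field] at this
  have e : ⟪gradient h x, y - x⟫ = fderiv ℝ h x y - fderiv ℝ h x x := by
    rw [gradient, InnerProductSpace.toDual_symm_apply, map_sub]
  linarith

lemma breg_nonneg (h : E → ℝ) (hd : Differentiable ℝ h) (hc : ConvexOn ℝ Set.univ h)
    (y x : E) : 0 ≤ breg h y x := by
  have := grad_fo h hd hc x y
  simp only [breg]; linarith

lemma three_point (h : E → ℝ) (u x x' : E) :
    ⟪gradient h x' - gradient h x, u - x'⟫ = breg h u x - breg h u x' - breg h x' x := by
  simp only [breg, inner_sub_left, inner_sub_right]; ring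

lemma deriv_nonneg_of_min (φ : ℝ → ℝ) (D : ℝ) (hD : HasDerivAt φ D 0)
    (hφ : ∀ t ∈ Set.Ioc (0:ℝ) 1, φ 0 ≤ φ t) : 0 ≤ D := by
  have h1 : Filter.Tendsto (slope φ 0) (nhdsWithin 0 (Set.Ioi 0)) (nhds D) :=
    (hasDerivAt_iff_tendsto_slope.mp hD).mono_left
      (nhdsWithin_mono _ (fun t ht => (ne_of_gt ht)))
  refine ge_of_tendsto h1 ?_
  have hmem : Set.Ioc (0:ℝ) 1 ∈ nhdsWithin (0:ℝ) (Set.Ioi 0) :=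
    Ioc_mem_nhdsGT_of_mem (by constructor <;> norm_num)
  filter_upwards [hmem] with t ht
  have ht0 : (0:ℝ) < t := ht.1
  have h2 : (0:ℝ) ≤ (φ t - φ 0) / (t - 0) :=
    div_nonneg (by linarith [hφ t ht]) (by linarith)
  simpa [slope_def_field] using h2

lemma proj_opt {Q : Set E} (hQconv : Convex ℝ Q) (h : E → ℝ) (hd : Differentiable ℝ h)
    (y x' u : E) (hx' : x' ∈ Q) (hu : u ∈ Q)
    (hmin : IsMinOn (fun z => breg h z y) Q x') :
    0 ≤ ⟪gradient h x' - gradient h y, u - x'⟫ := by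
  set v := u - x' with hv
  have hder1 : HasDerivAt (fun s : ℝ => h (x' + s • v)) ⟪gradient h x', v⟫ 0 := by
    simpa using hasDerivAt_comp_line h hd x' v 0
  have hder3 : HasDerivAt (fun s : ℝ => ⟪gradient h y, x' + s • v - y⟫)
      ⟪gradient h y, v⟫ 0 := by
    have : (fun s : ℝ => ⟪gradient h y, x' + s • v - y⟫)
        = fun s : ℝ => ⟪gradient h y, x' - y⟫ + s * ⟪gradient h y, v⟫ := by
      funext s
      have : x' + s • v - y = (x' - y) + s • v := by abel
      rw [this, inner_add_right, real_inner_smul_right]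
    rw [this]
    simpa using ((hasDerivAt_id (0:ℝ)).mul_const ⟪gradient h y, v⟫).const_add
      ⟪gradient h y, x' - y⟫
  have hder : HasDerivAt (fun s : ℝ => breg h (x' + s • v) y)
      (⟪gradient h x', v⟫ - ⟪gradient h y, v⟫) 0 := by
    simp only [breg]
    exact (hder1.sub_const (h y)).sub hder3
  have hmin' : ∀ t ∈ Set.Ioc (0:ℝ) 1,
      (fun s : ℝ => breg h (x' + s • v) y) 0 ≤ (fun s : ℝ => breg h (x' + s • v) y) t := by
    intro t ht
    have hmemQ : x' + t • (u - x') ∈ Q :=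
      hQconv.add_smul_sub_mem hx' hu ⟨ht.1.le, ht.2⟩
    have h0 : x' + (0:ℝ) • v = x' := by simp
    simp only [h0, hv, zero_smul, add_zero]
    exact isMinOn_iff.mp hmin _ hmemQ
  have := deriv_nonneg_of_min _ _ hder hmin'
  rw [inner_sub_left]
  exact this

end Aux

section Key
variable {E : Type*} [NormedAddCommGroup E] [InnerProductSpace ℝ E] [CompleteSpace E]

set_option maxHeartbeats 2000000 in
lemma step_key {Q : Set E} (hQconv : Convex ℝ Q) (h : E → ℝ)
    (hdiff : Differentiable ℝ h) (hconv : ConvexOn ℝ Set.univ h)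
    (F dd : E → ℝ) (MF MD' μF lam Sp : ℝ)
    (hlam : 0 ≤ lam) (hSp : 0 < Sp)
    (hFL : RelLipschitz h Q MF F) (hdL : RelLipschitz h Q MD' dd)
    (hFS : RelStrongConvex h Q μF F) (hdS : RelStrongConvex h Q 1 dd)
    (xt xt' u : E) (hxt : xt ∈ Q) (hu : u ∈ Q)
    (hstep : MDStepV h Q (1/Sp) (gradient F xt + lam • gradient dd xt) xt xt') :
    F xt - F u + lam * (dd xt - dd u) ≤
      (MF + lam * MD') ^ 2 / (2 * Sp)
        + (Sp - (μF + lam)) * breg h u xt - Sp * breg h u xt' := by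
  obtain ⟨y, hy, hx'Q, hmin⟩ := hstep
  set gF := gradient F xt with hgF
  set gd := gradient dd xt with hgd
  set p : ℝ := ⟪gF, xt' - xt⟫ with hp
  set q : ℝ := ⟪gd, xt' - xt⟫ with hq
  set r : ℝ := ⟪gF, xt - u⟫ with hr
  set w : ℝ := ⟪gd, xt - u⟫ with hw
  set Vt := breg h u xt with hVt
  set Vt' := breg h u xt' with hVt'
  set W := breg h xt' xt with hW
  set s' := Real.sqrt (2 * W) with hs'
  have hproj := proj_opt hQconv h hdiff y xt' u hx'Q hu hmin
  -- rewrite gradient h y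
  have hgydiff : gradient h xt' - gradient h y
      = (gradient h xt' - gradient h xt) + (1/Sp) • (gF + lam • gd) := by
    rw [hy]; abel
  have hinner : ⟪gradient h xt' - gradient h y, u - xt'⟫
      = (breg h u xt - breg h u xt' - breg h xt' xt)
        + (1/Sp) * ⟪gF + lam • gd, u - xt'⟫ := by
    rw [hgydiff, inner_add_left, real_inner_smul_left, three_point]
  have hvux : ⟪gF + lam • gd, u - xt'⟫ = -((p + r) + lam * (q + w)) := by
    have hdecomp : u - xt' = -((xt' - xt) + (xt - u)) := by abel
    rw [hp, hq, hr, hw, hdecomp]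
    simp only [inner_neg_right, inner_add_left, inner_add_right, real_inner_smul_left]
    ring
  have hSum : (p + r) + lam * (q + w) ≤ Sp * (Vt - Vt' - W) := by
    have h0 : 0 ≤ (Vt - Vt' - W) + (1/Sp) * (-((p + r) + lam * (q + w))) := by
      rw [← hvux]
      calc (0:ℝ) ≤ ⟪gradient h xt' - gradient h y, u - xt'⟫ := hproj
        _ = _ := hinner
    have h1 : (1/Sp) * ((p + r) + lam * (q + w)) ≤ Vt - Vt' - W := by linarith
    have h2 := mul_le_mul_of_nonneg_left h1 hSp.le
    rw [← mul_assoc, mul_one_div_cancel hSp.ne', one_mul] at h2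
    exact h2
  have hWnn : 0 ≤ W := breg_nonneg h hdiff hconv _ _
  have hs'sq : s' ^ 2 = 2 * W := Real.sq_sqrt (by linarith)
  have hLf : 0 ≤ p + MF * s' := hFL xt hxt xt' hx'Q
  have hLd : 0 ≤ q + MD' * s' := hdL xt hxt xt' hx'Q
  have hLdl : 0 ≤ lam * q + lam * (MD' * s') := by nlinarith [mul_nonneg hlam hLd]
  have hSCf : F xt + (-r) + μF * Vt ≤ F u := by
    have := hFS u hu xt hxt
    have hne : ⟪gF, u - xt⟫ = -r := by
      have hux : u - xt = -(xt - u) := by abel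
      rw [hux, inner_neg_right, hr]
    rw [hne] at this; exact this
  have hSCd : dd xt + (-w) + 1 * Vt ≤ dd u := by
    have := hdS u hu xt hxt
    have hne : ⟪gd, u - xt⟫ = -w := by
      have hux : u - xt = -(xt - u) := by abel
      rw [hux, inner_neg_right, hw]
    rw [hne] at this; exact this
  have hSCdl : lam * (dd xt - dd u) + lam * Vt ≤ lam * w := by
    have h1 : dd xt - dd u + Vt ≤ w := by linarith
    nlinarith [mul_le_mul_of_nonneg_left h1 hlam]
  have hKey : (MF + lam * MD') * s' - Sp * W ≤ (MF + lam * MD') ^ 2 / (2 * Sp) := by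
    have h2 : ((MF + lam * MD') * s' - Sp * W) * (2 * Sp) ≤ (MF + lam * MD') ^ 2 := by
      have hWs : Sp^2 * s'^2 = Sp^2 * (2*W) := by rw [hs'sq]
      nlinarith [sq_nonneg ((MF + lam * MD') - Sp * s'), hWs, hSp, hWnn]
    exact (le_div_iff₀ (by positivity : (0:ℝ) < 2 * Sp)).mpr h2
  have e1 : Sp * (Vt - Vt' - W) = Sp*Vt - Sp*Vt' - Sp*W := by ring
  have e2 : (Sp - (μF + lam)) * Vt = Sp*Vt - μF*Vt - lam*Vt := by ring
  have e3 : (MF + lam * MD') * s' = MF*s' + lam*(MD'*s') := by ring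
  linarith [hSCf, hSCdl, hSum, hLf, hLdl, hKey, e1, e2, e3]

lemma telescope_G (G : ℕ → ℝ) (n : ℕ) :
    ∑ t ∈ Finset.Icc 1 n, (G (t - 1) - G t) = G 0 - G n := by
  induction n with
  | zero => simp
  | succ k ih =>
      rw [Finset.sum_Icc_succ_top (Nat.le_add_left 1 k), ih]
      simp

lemma RelLipschitz.mono {h : E → ℝ} {Q : Set E} {M M' : ℝ} {f : E → ℝ}
    (hf : RelLipschitz h Q M f) (hMM : M ≤ M') : RelLipschitz h Q M' f := by
  intro x hx y hy
  have := hf x hx y hy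
  nlinarith [Real.sqrt_nonneg (2 * breg h y x),
    mul_le_mul_of_nonneg_right hMM (Real.sqrt_nonneg (2 * breg h y x))]

end Key
/-- Theorem 5 (regularized switching Mirror Descent): with the adaptive regularization
coefficients `λ_t` and step sizes `η_t = 1/(μ_{1:t} + λ_{1:t})`, if the run makes exactly
`T` productive and `T_J` non-productive steps and the regret is nonnegative, then
`g(x_t) ≤ ε` at all productive steps and
`Regret_T ≤ λ_{1:T+T_J}·A² + Σ_t (M + λ_t·M_d)²/(μ_{1:t} + λ_{1:t}) − ε·T_J`. -/
theorem regularized_switching_regret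
    {E : Type*} [NormedAddCommGroup E] [InnerProductSpace ℝ E] [FiniteDimensional ℝ E]
    (Q : Set E) (hQne : Q.Nonempty) (hQclosed : IsClosed Q) (hQconv : Convex ℝ Q)
    (h : E → ℝ) (hdiff : Differentiable ℝ h) (hconv : ConvexOn ℝ Set.univ h)
    (T TJ : ℕ) (hT : 0 < T)
    (f : Fin T → E → ℝ) (g : E → ℝ)
    (hfdiff : ∀ i, Differentiable ℝ (f i)) (hgdiff : Differentiable ℝ g)
    (hfconv : ∀ i, ConvexOn ℝ Set.univ (f i)) (hgconv : ConvexOn ℝ Set.univ g)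
    (Mi : Fin T → ℝ) (Mg μg : ℝ) (μ : ℕ → ℝ)
    (hfLip : ∀ i, RelLipschitz h Q (Mi i) (f i)) (hgLip : RelLipschitz h Q Mg g)
    (hgSC : RelStrongConvex h Q μg g)
    (M : ℝ) (hM : M = max (⨆ i, Mi i) Mg)
    -- the regularizer d:
    (d : E → ℝ) (hddiff : Differentiable ℝ d) (hdconv : ConvexOn ℝ Set.univ d)
    (Md A2 : ℝ)
    (hdLip : RelLipschitz h Q Md d) (hdSC : RelStrongConvex h Q 1 d)
    (hdnn : ∀ z ∈ Q, 0 ≤ d z) (hA2 : IsLUB (d '' Q) A2)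
    -- the regularization coefficients and step sizes:
    (lam : ℕ → ℝ)
    (hpos : ∀ t ∈ Finset.Icc 1 (T + TJ),
      0 < (∑ s ∈ Finset.Icc 1 t, μ s) + ∑ s ∈ Finset.Icc 1 t, lam s)
    (ε : ℝ) (hlam : ∀ t ∈ Finset.Icc 1 (T + TJ), lam t =
      (Real.sqrt (((∑ s ∈ Finset.Icc 1 t, μ s) + ∑ s ∈ Finset.Icc 1 (t - 1), lam s) ^ 2
          + 8 * M ^ 2 / (A2 + 2 * Md ^ 2))
        - ((∑ s ∈ Finset.Icc 1 t, μ s) + ∑ s ∈ Finset.Icc 1 (t - 1), lam s)) / 2)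
    (hε : 0 < ε)
    -- the iterates and the run of the regularized switching algorithm:
    (x : ℕ → E) (hx1 : x 1 ∈ Q)
    (σ : Fin T → ℕ) (hσmono : StrictMono σ)
    (hσrange : ∀ i, σ i ∈ Finset.Icc 1 (T + TJ))
    (hproductive : ∀ t ∈ Finset.Icc 1 (T + TJ), (g (x t) ≤ ε ↔ ∃ i, σ i = t))
    -- at the `i`-th productive step, `f i` is `μ_{σ i}`-relatively strongly convex:
    (hfSC : ∀ i, RelStrongConvex h Q (μ (σ i)) (f i))
    -- at non-productive steps, `μ_t = μ_g`:
    (hμg : ∀ t ∈ Finset.Icc 1 (T + TJ), (¬ ∃ i, σ i = t) → μ t = μg)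
    (hstepP : ∀ i : Fin T,
      MDStepV h Q (1 / ((∑ s ∈ Finset.Icc 1 (σ i), μ s) + ∑ s ∈ Finset.Icc 1 (σ i), lam s))
        (gradient (f i) (x (σ i)) + lam (σ i) • gradient d (x (σ i)))
        (x (σ i)) (x (σ i + 1)))
    (hstepN : ∀ t ∈ Finset.Icc 1 (T + TJ), (¬ ∃ i, σ i = t) →
      MDStepV h Q (1 / ((∑ s ∈ Finset.Icc 1 t, μ s) + ∑ s ∈ Finset.Icc 1 t, lam s))
        (gradient g (x t) + lam t • gradient d (x t)) (x t) (x (t + 1)))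
    -- the constrained minimizer x*:
    (xs : E) (hxsQ : xs ∈ Q) (hxsg : g xs ≤ 0)
    (hxsmin : ∀ y ∈ Q, g y ≤ 0 → ∑ i, f i xs ≤ ∑ i, f i y)
    -- nonnegative regret:
    (hReg : 0 ≤ ∑ i, f i (x (σ i)) - ∑ i, f i xs) :

    (∀ i, g (x (σ i)) ≤ ε) ∧
    ∑ i, f i (x (σ i)) - ∑ i, f i xs ≤
      (∑ s ∈ Finset.Icc 1 (T + TJ), lam s) * A2 +
        (∑ t ∈ Finset.Icc 1 (T + TJ), (M + lam t * Md) ^ 2 /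
          ((∑ s ∈ Finset.Icc 1 t, μ s) + ∑ s ∈ Finset.Icc 1 t, lam s)) - ε * TJ := by
  classical
  have hprod1 : ∀ i, g (x (σ i)) ≤ ε := fun i =>
    (hproductive (σ i) (hσrange i)).mpr ⟨i, rfl⟩
  refine ⟨hprod1, ?_⟩
  set N := T + TJ with hN
  set S : ℕ → ℝ := fun t => (∑ s ∈ Finset.Icc 1 t, μ s) + ∑ s ∈ Finset.Icc 1 t, lam s
    with hSdef
  set G : ℕ → ℝ := fun t => S t * breg h xs (x (t + 1)) with hGdef
  have hA2nn : 0 ≤ A2 := by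
    obtain ⟨q, hq⟩ := hQne
    exact le_trans (hdnn q hq) (hA2.1 ⟨q, hq, rfl⟩)
  have hdxs : d xs ≤ A2 := hA2.1 ⟨xs, hxsQ, rfl⟩
  have hlamnn : ∀ t ∈ Finset.Icc 1 N, 0 ≤ lam t := by
    intro t ht
    rw [hlam t ht]
    set a := (∑ s ∈ Finset.Icc 1 t, μ s) + ∑ s ∈ Finset.Icc 1 (t - 1), lam s with ha
    have hc : 0 ≤ 8 * M ^ 2 / (A2 + 2 * Md ^ 2) :=
      div_nonneg (by positivity) (by nlinarith [sq_nonneg Md])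
    have h1 : Real.sqrt (a ^ 2) ≤ Real.sqrt (a ^ 2 + 8 * M ^ 2 / (A2 + 2 * Md ^ 2)) :=
      Real.sqrt_le_sqrt (by linarith)
    rw [Real.sqrt_sq_eq_abs] at h1
    have h2 := le_abs_self a
    linarith
  have hMi : ∀ i, Mi i ≤ M := by
    intro i
    rw [hM]
    exact le_trans (le_ciSup ((Set.finite_range Mi).bddAbove) i) (le_max_left _ _)
  have hMg' : Mg ≤ M := hM ▸ le_max_right _ _
  have hxQ : ∀ t ∈ Finset.Icc 1 (N + 1), x t ∈ Q := by
    intro t ht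
    rw [Finset.mem_Icc] at ht
    rcases eq_or_lt_of_le ht.1 with h1 | h1
    · rw [← h1]; exact hx1
    · have hr : t - 1 ∈ Finset.Icc 1 N := by rw [Finset.mem_Icc]; omega
      have hrt : t - 1 + 1 = t := by omega
      by_cases hp : ∃ i, σ i = t - 1
      · obtain ⟨i, hi⟩ := hp
        obtain ⟨y, _, hQ', _⟩ := hstepP i
        rw [hi, hrt] at hQ'
        exact hQ'
      · obtain ⟨y, _, hQ', _⟩ := hstepN (t - 1) hr hp
        rw [hrt] at hQ'
        exact hQ'
  have hNge : 1 ≤ N := by omega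
  set L : ℕ → ℝ := fun t =>
    if ht : ∃ i, σ i = t then f (Classical.choose ht) (x t) - f (Classical.choose ht) xs
    else g (x t) - g xs with hLdef
  have hSrec : ∀ t ∈ Finset.Icc 1 N, S (t - 1) = S t - (μ t + lam t) := by
    intro t ht
    rw [Finset.mem_Icc] at ht
    obtain ⟨k, rfl⟩ : ∃ k, t = k + 1 := ⟨t - 1, by omega⟩
    simp only [hSdef, Nat.add_sub_cancel]
    rw [Finset.sum_Icc_succ_top (Nat.le_add_left 1 k),
      Finset.sum_Icc_succ_top (Nat.le_add_left 1 k)]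
    ring
  have hkey : ∀ t ∈ Finset.Icc 1 N,
      L t + lam t * (d (x t) - d xs) ≤
        (M + lam t * Md) ^ 2 / (2 * S t) + (G (t - 1) - G t) := by
    intro t ht
    have htIcc := ht
    rw [Finset.mem_Icc] at htIcc
    have hSt : 0 < S t := hpos t ht
    have hxtQ : x t ∈ Q := hxQ t (by rw [Finset.mem_Icc]; omega)
    have hlamt := hlamnn t ht
    have hGe : G (t - 1) = (S t - (μ t + lam t)) * breg h xs (x t) := by
      have h1 : G (t - 1) = S (t - 1) * breg h xs (x (t - 1 + 1)) := rfl
      rw [h1, show t - 1 + 1 = t from by omega, hSrec t ht]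
    have hGt : G t = S t * breg h xs (x (t + 1)) := rfl
    rw [hGe, hGt]
    by_cases hp : ∃ i, σ i = t
    · set i := Classical.choose hp with hi
      have hit : σ i = t := Classical.choose_spec hp
      have hstep : MDStepV h Q (1 / S t)
          (gradient (f i) (x t) + lam t • gradient d (x t)) (x t) (x (t + 1)) := by
        have hs := hstepP i
        rw [hit] at hs
        exact hs
      have hSC : RelStrongConvex h Q (μ t) (f i) := by
        have hs := hfSC i; rwa [hit] at hs
      have hb := step_key hQconv h hdiff hconv (f i) d M Md (μ t) (lam t) (S t)
        hlamt hSt ((hfLip i).mono (hMi i)) hdLip hSC hdSC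
        (x t) (x (t + 1)) xs hxtQ hxsQ hstep
      have hL : L t = f i (x t) - f i xs := by
        simp only [hLdef]
        rw [dif_pos hp]
      rw [hL]
      linarith [hb]
    · have hμt : μ t = μg := hμg t ht hp
      have hstep : MDStepV h Q (1 / S t)
          (gradient g (x t) + lam t • gradient d (x t)) (x t) (x (t + 1)) :=
        hstepN t ht hp
      have hSC : RelStrongConvex h Q (μ t) g := by rw [hμt]; exact hgSC
      have hb := step_key hQconv h hdiff hconv g d M Md (μ t) (lam t) (S t)
        hlamt hSt (hgLip.mono hMg') hdLip hSC hdSC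
        (x t) (x (t + 1)) xs hxtQ hxsQ hstep
      have hL : L t = g (x t) - g xs := by
        simp only [hLdef]
        rw [dif_neg hp]
      rw [hL]
      linarith [hb]
  -- sum the per-step bounds
  have hsum1 : ∑ t ∈ Finset.Icc 1 N, (L t + lam t * (d (x t) - d xs)) ≤
      ∑ t ∈ Finset.Icc 1 N, ((M + lam t * Md) ^ 2 / (2 * S t) + (G (t - 1) - G t)) :=
    Finset.sum_le_sum hkey
  have htel : ∑ t ∈ Finset.Icc 1 N, (G (t - 1) - G t) = G 0 - G N := telescope_G G N
  have hG0 : G 0 = 0 := by simp [hGdef, hSdef]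
  have hGN : 0 ≤ G N :=
    mul_nonneg (hpos N (by rw [Finset.mem_Icc]; omega)).le (breg_nonneg h hdiff hconv _ _)
  have hsum2 : ∑ t ∈ Finset.Icc 1 N, (M + lam t * Md) ^ 2 / (2 * S t) ≤
      ∑ t ∈ Finset.Icc 1 N, (M + lam t * Md) ^ 2 / S t := by
    refine Finset.sum_le_sum fun t ht => ?_
    have hSt : 0 < S t := hpos t ht
    exact div_le_div_of_nonneg_left (sq_nonneg _) hSt (by linarith)
  have hdlb : (∑ t ∈ Finset.Icc 1 N, lam t) * (-A2) ≤
      ∑ t ∈ Finset.Icc 1 N, lam t * (d (x t) - d xs) := by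
    rw [Finset.sum_mul]
    refine Finset.sum_le_sum fun t ht => ?_
    have hxtQ : x t ∈ Q := by
      refine hxQ t ?_
      rw [Finset.mem_Icc] at ht ⊢
      omega
    have h1 : -A2 ≤ d (x t) - d xs := by linarith [hdnn (x t) hxtQ]
    exact mul_le_mul_of_nonneg_left h1 (hlamnn t ht)
  set P := Finset.image σ Finset.univ with hPdef
  have hPsub : P ⊆ Finset.Icc 1 N := by
    intro t ht
    rw [hPdef, Finset.mem_image] at ht
    obtain ⟨i, _, rfl⟩ := ht
    exact hσrange i
  have hsplit : ∑ t ∈ Finset.Icc 1 N \ P, L t + ∑ t ∈ P, L t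
      = ∑ t ∈ Finset.Icc 1 N, L t := Finset.sum_sdiff hPsub
  have hPsum : ∑ t ∈ P, L t = ∑ i, (f i (x (σ i)) - f i xs) := by
    rw [hPdef, Finset.sum_image (fun a _ b _ hab => hσmono.injective hab)]
    refine Finset.sum_congr rfl fun i _ => ?_
    have hex : ∃ j, σ j = σ i := ⟨i, rfl⟩
    have h1 : L (σ i) = f (Classical.choose hex) (x (σ i)) - f (Classical.choose hex) xs := by
      simp only [hLdef]
      rw [dif_pos hex]
    rw [h1, hσmono.injective (Classical.choose_spec hex)]
  have hNPsum : (TJ : ℝ) * ε ≤ ∑ t ∈ Finset.Icc 1 N \ P, L t := by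
    have hcard : (Finset.Icc 1 N \ P).card = TJ := by
      rw [Finset.card_sdiff_of_subset hPsub, hPdef,
        Finset.card_image_of_injective _ hσmono.injective]
      simp only [Nat.card_Icc, Finset.card_univ, Fintype.card_fin]
      omega
    have hlb : ∀ t ∈ Finset.Icc 1 N \ P, ε ≤ L t := by
      intro t ht
      rw [Finset.mem_sdiff] at ht
      have hnp : ¬ ∃ i, σ i = t := by
        rintro ⟨i, hi⟩
        exact ht.2 (by rw [hPdef, Finset.mem_image]; exact ⟨i, Finset.mem_univ i, hi⟩)
      have hgt : ¬ g (x t) ≤ ε := fun hle => hnp ((hproductive t ht.1).mp hle)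
      have h1 : L t = g (x t) - g xs := by
        simp only [hLdef]
        rw [dif_neg hnp]
      rw [h1]
      push_neg at hgt
      linarith [hxsg]
    calc (TJ : ℝ) * ε = (Finset.Icc 1 N \ P).card * ε := by rw [hcard]
      _ = ∑ _t ∈ Finset.Icc 1 N \ P, ε := by rw [Finset.sum_const, nsmul_eq_mul]
      _ ≤ _ := Finset.sum_le_sum hlb
  have hregret : ∑ i, f i (x (σ i)) - ∑ i, f i xs = ∑ i, (f i (x (σ i)) - f i xs) :=
    (Finset.sum_sub_distrib _ _).symm
  have hsplitLR : ∑ t ∈ Finset.Icc 1 N, (L t + lam t * (d (x t) - d xs))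
      = ∑ t ∈ Finset.Icc 1 N, L t + ∑ t ∈ Finset.Icc 1 N, lam t * (d (x t) - d xs) :=
    Finset.sum_add_distrib
  have hsplitR : ∑ t ∈ Finset.Icc 1 N, ((M + lam t * Md) ^ 2 / (2 * S t) + (G (t - 1) - G t))
      = ∑ t ∈ Finset.Icc 1 N, (M + lam t * Md) ^ 2 / (2 * S t)
        + ∑ t ∈ Finset.Icc 1 N, (G (t - 1) - G t) :=
    Finset.sum_add_distrib
  have hgoal : ∑ i, f i (x (σ i)) - ∑ i, f i xs ≤
      (∑ s ∈ Finset.Icc 1 N, lam s) * A2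
        + (∑ t ∈ Finset.Icc 1 N, (M + lam t * Md) ^ 2 / S t) - ε * TJ := by
    have := hsum1
    rw [hsplitLR, hsplitR, htel, hG0] at this
    rw [hregret, ← hPsum]
    nlinarith [hNPsum, hdlb, hsum2, hGN, hsplit]
  simpa only [hSdef] using hgoal
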